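/- Let m, h ∈ ℕ with 1 ≤ h ≤ m - 1 and let S = ⟨m, m+1, ..., m+h⟩ be the numerical semigroup generated by m, m+1, ..., m+h. Then S = {λ₁ m + λ₂ : λ₁, λ₂ ∈ ℕ, 0 ≤ λ₂ ≤ h·λ₁}. -/

import Mathlib

/-- σ(x) = x/2 - |S ∩ [0,x]| + 1 -/
noncomputable def sig (S : Set ℕ) (x : ℕ) : ℚ :=
  (x : ℚ) / 2 - ((S ∩ Set.Icc 0 x).ncard : ℚ) + 1

/-- ngCond: least c with [c,∞) ⊆ S -/
noncomputable def ngCond (S : Set ℕ) : ℕ := sInf {k : ℕ | ∀ n, k ≤ n → n ∈ S}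

theorem stmt11 (m h : ℕ) (h1 : 1 ≤ h) (h2 : h ≤ m - 1) :
    ∀ n : ℕ, n ∈ AddSubmonoid.closure (Set.Icc m (m + h)) ↔
      ∃ l1 l2 : ℕ, l2 ≤ h * l1 ∧ n = l1 * m + l2 := by
  intro n
  constructor
  · intro hn
    induction hn using AddSubmonoid.closure_induction with
    | mem x hx =>
      obtain ⟨hx1, hx2⟩ := hx
      exact ⟨1, x - m, by omega, by omega⟩
    | zero => exact ⟨0, 0, by omega, by omega⟩
    | add a b _ _ ha hb =>
      obtain ⟨l1, l2, hle, rfl⟩ := ha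
      obtain ⟨l1', l2', hle', rfl⟩ := hb
      refine ⟨l1 + l1', l2 + l2', ?_, by ring⟩
      rw [mul_add]; omega
  · rintro ⟨l1, l2, hle, rfl⟩
    induction l1 generalizing l2 with
    | zero =>
      have : l2 = 0 := by omega
      subst this
      simpa using (AddSubmonoid.closure (Set.Icc m (m + h))).zero_mem
    | succ k ih =>
      by_cases hc : l2 ≤ h
      · have e1 : (k + 1) * m = k * m + m := by ring
        have heq : (k + 1) * m + l2 = (m + l2) + (k * m + 0) := by omega
        rw [heq]
        exact AddSubmonoid.add_mem _
          (AddSubmonoid.subset_closure ⟨by omega, by omega⟩)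
          (ih 0 (by omega))
      · have e1 : (k + 1) * m = k * m + m := by ring
        have e2 : h * (k + 1) = h * k + h := by ring
        have heq : (k + 1) * m + l2 = (m + h) + (k * m + (l2 - h)) := by omega
        rw [heq]
        exact AddSubmonoid.add_mem _
          (AddSubmonoid.subset_closure ⟨by omega, by omega⟩)
          (ih (l2 - h) (by omega))
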